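/- For the virus inoculation game on the complete graph K_n, the Windfall of Friendship satisfies Υ(F,I) ≤ 1/(1 − C/(4L)) ≤ 4/3 for all F ∈ [0,1] and all n; moreover this bound is tight: for C = L, even n, and F = 1, the unique FNE has cost 3nL/4 while the worst NE has cost nL, so Υ(1,I) = 4/3. -/

import Mathlib

open Finset
open scoped Classical

noncomputable section

variable {V : Type*} [Fintype V] [DecidableEq V]

/-- Reachability through insecure players: a path along edges whose endpoints are all insecure. -/
def insecureReach (G : SimpleGraph V) (a : V → Bool) : V → V → Prop :=
  Relation.ReflTransGen (fun x y => G.Adj x y ∧ a x = false ∧ a y = false)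

/-- Size of `i`'s attack component (if `i` is secure: the size of the component that would
result if `i` became insecure). -/
def compSize (G : SimpleGraph V) (a : V → Bool) (i : V) : ℕ :=
  {j | insecureReach G (Function.update a i false) i j}.ncard

/-- Actual individual cost: `C` if inoculated, else `L · k_i / n`. -/
def actualCost (G : SimpleGraph V) (C L : ℝ) (a : V → Bool) (i : V) : ℝ :=
  if a i = true then C else L * (compSize G a i) / (Fintype.card V)

def socialCost (G : SimpleGraph V) (C L : ℝ) (a : V → Bool) : ℝ :=
  ∑ i, actualCost G C L a i

/-- Perceived cost: actual cost plus `F` times the sum of the neighbors' actual costs. -/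
def perceivedCost (G : SimpleGraph V) (C L F : ℝ) (a : V → Bool) (i : V) : ℝ :=
  actualCost G C L a i +
    F * ∑ j ∈ Finset.univ.filter (fun j => G.Adj i j), actualCost G C L a j

/-- Pure Nash equilibrium: no unilateral deviation lowers the actual cost. -/
def isNE (G : SimpleGraph V) (C L : ℝ) (a : V → Bool) : Prop :=
  ∀ (i : V) (b : Bool),
    actualCost G C L a i ≤ actualCost G C L (Function.update a i b) i

/-- Friendship Nash equilibrium: no unilateral deviation lowers the perceived cost. -/
def isFNE (G : SimpleGraph V) (C L F : ℝ) (a : V → Bool) : Prop :=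
  ∀ (i : V) (b : Bool),
    perceivedCost G C L F a i ≤ perceivedCost G C L F (Function.update a i b) i

/-- Star graph on `Fin n` with center `0`. -/
def starG (n : ℕ) : SimpleGraph (Fin n) :=
  SimpleGraph.fromRel (fun i _ => i.val = 0)

namespace WoF
variable {n : ℕ}

lemma reach_top_iff (b : Fin n → Bool) (i j : Fin n) :
    insecureReach (⊤ : SimpleGraph (Fin n)) b i j ↔ (j = i ∨ (b i = false ∧ b j = false)) := by
  constructor
  · intro h
    induction h with
    | refl => exact Or.inl rfl
    | tail h1 h2 ih =>
      rcases ih with rfl | ⟨hi, _⟩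
      · exact Or.inr ⟨h2.2.1, h2.2.2⟩
      · exact Or.inr ⟨hi, h2.2.2⟩
  · rintro (rfl | ⟨hi, hj⟩)
    · exact Relation.ReflTransGen.refl
    · by_cases h : i = j
      · subst h; exact Relation.ReflTransGen.refl
      · exact Relation.ReflTransGen.single ⟨by simpa using h, hi, hj⟩

/-- insecure set of a profile -/
def ins (a : Fin n → Bool) : Finset (Fin n) := univ.filter (fun i => a i = false)

lemma mem_ins {a : Fin n → Bool} {i : Fin n} : i ∈ ins a ↔ a i = false := by
  simp [ins]

lemma ins_update_false (a : Fin n → Bool) (i : Fin n) :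
    ins (Function.update a i false) = insert i (ins a) := by
  ext j
  simp only [mem_ins, Finset.mem_insert, Function.update_apply]
  by_cases h : j = i <;> simp [h]

lemma ins_update_true (a : Fin n → Bool) (i : Fin n) :
    ins (Function.update a i true) = (ins a).erase i := by
  ext j
  simp only [mem_ins, Finset.mem_erase, Function.update_apply]
  by_cases h : j = i <;> simp [h]

lemma compSize_top (a : Fin n → Bool) (i : Fin n) :
    compSize (⊤ : SimpleGraph (Fin n)) a i = (insert i (ins a)).card := by
  unfold compSize
  have hset : {j | insecureReach (⊤ : SimpleGraph (Fin n)) (Function.update a i false) i j}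
      = ↑(insert i (ins a)) := by
    ext j
    simp only [Set.mem_setOf_eq, reach_top_iff, Finset.coe_insert, Set.mem_insert_iff,
      Finset.mem_coe, mem_ins, Function.update_apply]
    by_cases h : j = i <;> simp [h]
  rw [hset, Set.ncard_coe_finset]

lemma actual_top (C L : ℝ) (a : Fin n → Bool) (i : Fin n) :
    actualCost (⊤ : SimpleGraph (Fin n)) C L a i =
      if a i = true then C else L * ((ins a).card : ℝ) / n := by
  unfold actualCost
  by_cases h : a i = true
  · simp [h]
  · have hb : a i = false := by simpa using h
    rw [if_neg h, if_neg h, compSize_top, Finset.insert_eq_self.mpr (mem_ins.mpr hb),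
      Fintype.card_fin]

lemma social_top (C L : ℝ) (a : Fin n → Bool) :
    socialCost (⊤ : SimpleGraph (Fin n)) C L a =
      ((n : ℝ) - ((ins a).card : ℝ)) * C
        + ((ins a).card : ℝ) * (L * ((ins a).card : ℝ) / n) := by
  unfold socialCost
  have h1 : ∀ i, actualCost (⊤ : SimpleGraph (Fin n)) C L a i =
      if a i = true then C else L * ((ins a).card : ℝ) / n := actual_top C L a
  rw [Finset.sum_congr rfl fun i _ => h1 i, Finset.sum_ite, Finset.sum_const, Finset.sum_const,
    nsmul_eq_mul, nsmul_eq_mul]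
  have hfilt : univ.filter (fun i => ¬ a i = true) = ins a := by
    ext j; simp [ins]
  have hcard : (univ.filter (fun i => a i = true)).card + (ins a).card = n := by
    rw [← hfilt]
    rw [Finset.card_filter_add_card_filter_not, Finset.card_univ, Fintype.card_fin]
  have : ((univ.filter (fun i => a i = true)).card : ℝ) = (n : ℝ) - (ins a).card := by
    have := congrArg (Nat.cast : ℕ → ℝ) hcard
    push_cast at this
    linarith
  rw [hfilt, this]


lemma perceived_top (C L F : ℝ) (a : Fin n → Bool) (i : Fin n) :
    perceivedCost (⊤ : SimpleGraph (Fin n)) C L F a i =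
      actualCost (⊤ : SimpleGraph (Fin n)) C L a i +
        F * (socialCost (⊤ : SimpleGraph (Fin n)) C L a
              - actualCost (⊤ : SimpleGraph (Fin n)) C L a i) := by
  unfold perceivedCost socialCost
  congr 2
  rw [← Finset.sum_erase_eq_sub (Finset.mem_univ i)]
  apply Finset.sum_congr _ (fun _ _ => rfl)
  ext j
  simp only [Finset.mem_filter, Finset.mem_univ, true_and, SimpleGraph.top_adj,
    Finset.mem_erase, and_true]
  exact ne_comm

/-- difference in actual cost when an insecure player secures itself -/
lemma actual_diff_ins (C L : ℝ) (a : Fin n → Bool) (i : Fin n) (hi : a i = false) :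
    actualCost (⊤ : SimpleGraph (Fin n)) C L (Function.update a i true) i
      - actualCost (⊤ : SimpleGraph (Fin n)) C L a i
      = C - L * ((ins a).card : ℝ) / n := by
  rw [actual_top, actual_top, if_pos (by simp), if_neg (by simp [hi])]

/-- difference in actual cost when a secure player deviates -/
lemma actual_diff_sec (C L : ℝ) (a : Fin n → Bool) (i : Fin n) (hi : a i = true) :
    actualCost (⊤ : SimpleGraph (Fin n)) C L (Function.update a i false) i
      - actualCost (⊤ : SimpleGraph (Fin n)) C L a i
      = L * (((ins a).card : ℝ) + 1) / n - C := by
  have hni : i ∉ ins a := by simp [mem_ins, hi]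
  rw [actual_top, actual_top, if_pos hi, if_neg (by simp), ins_update_false,
    Finset.card_insert_of_notMem hni]
  push_cast
  ring

lemma perceived_diff_ins (C L F : ℝ) (a : Fin n → Bool) (i : Fin n) (hi : a i = false) :
    perceivedCost (⊤ : SimpleGraph (Fin n)) C L F (Function.update a i true) i
      - perceivedCost (⊤ : SimpleGraph (Fin n)) C L F a i
      = C - L * (((ins a).card : ℝ) + F * (((ins a).card : ℝ) - 1)) / n := by
  have hmem : i ∈ ins a := mem_ins.mpr hi
  have hk1 : 1 ≤ (ins a).card := Finset.card_pos.mpr ⟨i, hmem⟩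
  have hcast : (((ins a).card - 1 : ℕ) : ℝ) = ((ins a).card : ℝ) - 1 := by
    push_cast [hk1]; ring
  rw [perceived_top, perceived_top, actual_top, actual_top, if_pos (by simp),
    if_neg (by simp [hi]), social_top, social_top, ins_update_true,
    Finset.card_erase_of_mem hmem, hcast]
  ring

lemma perceived_diff_sec (C L F : ℝ) (a : Fin n → Bool) (i : Fin n) (hi : a i = true) :
    perceivedCost (⊤ : SimpleGraph (Fin n)) C L F (Function.update a i false) i
      - perceivedCost (⊤ : SimpleGraph (Fin n)) C L F a i
      = L * (((ins a).card : ℝ) + 1 + F * ((ins a).card : ℝ)) / n - C := by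
  have hni : i ∉ ins a := by simp [mem_ins, hi]
  rw [perceived_top, perceived_top, actual_top, actual_top, if_pos hi, if_neg (by simp),
    social_top, social_top, ins_update_false, Finset.card_insert_of_notMem hni]
  push_cast
  ring

lemma isNE_top_iff (C L : ℝ) (a : Fin n → Bool) :
    isNE (⊤ : SimpleGraph (Fin n)) C L a ↔
      ((∀ i, a i = false → L * ((ins a).card : ℝ) / n ≤ C) ∧
        (∀ i, a i = true → C ≤ L * (((ins a).card : ℝ) + 1) / n)) := by
  constructor
  · intro h
    constructor
    · intro i hi
      have := h i true
      have hd := actual_diff_ins C L a i hi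
      linarith
    · intro i hi
      have := h i false
      have hd := actual_diff_sec C L a i hi
      linarith
  · rintro ⟨h1, h2⟩ i b
    by_cases hi : a i = true
    · cases b with
      | true => rw [show Function.update a i true = a by rw [← hi]; exact Function.update_eq_self i a]
      | false =>
        have hd := actual_diff_sec C L a i hi
        have := h2 i hi
        linarith
    · have hi' : a i = false := by simpa using hi
      cases b with
      | false => rw [show Function.update a i false = a by rw [← hi']; exact Function.update_eq_self i a]
      | true =>
        have hd := actual_diff_ins C L a i hi'
        have := h1 i hi'
        linarith

lemma isFNE_top_iff (C L F : ℝ) (a : Fin n → Bool) :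
    isFNE (⊤ : SimpleGraph (Fin n)) C L F a ↔
      ((∀ i, a i = false →
          L * (((ins a).card : ℝ) + F * (((ins a).card : ℝ) - 1)) / n ≤ C) ∧
        (∀ i, a i = true →
          C ≤ L * (((ins a).card : ℝ) + 1 + F * ((ins a).card : ℝ)) / n)) := by
  constructor
  · intro h
    constructor
    · intro i hi
      have := h i true
      have hd := perceived_diff_ins C L F a i hi
      linarith
    · intro i hi
      have := h i false
      have hd := perceived_diff_sec C L F a i hi
      linarith
  · rintro ⟨h1, h2⟩ i b
    by_cases hi : a i = true
    · cases b with
      | true => rw [show Function.update a i true = a by rw [← hi]; exact Function.update_eq_self i a]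
      | false =>
        have hd := perceived_diff_sec C L F a i hi
        have := h2 i hi
        linarith
    · have hi' : a i = false := by simpa using hi
      cases b with
      | false => rw [show Function.update a i false = a by rw [← hi']; exact Function.update_eq_self i a]
      | true =>
        have hd := perceived_diff_ins C L F a i hi'
        have := h1 i hi'
        linarith

/-- profile with exactly `m` insecure players (the first `m`) -/
def prof (n m : ℕ) : Fin n → Bool := fun i => decide (m ≤ i.val)

lemma ins_prof_card {m : ℕ} (h : m ≤ n) : (ins (prof n m)).card = m := by
  have h1 : ins (prof n m) = univ.filter (fun i : Fin n => i.val < m) := by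
    ext i
    simp [ins, prof, Nat.not_le, decide_eq_false_iff_not]
  have himg : (univ.filter (fun i : Fin n => i.val < m)).image Fin.val = Finset.range m := by
    ext x
    simp only [Finset.mem_image, Finset.mem_filter, Finset.mem_univ, true_and, Finset.mem_range]
    constructor
    · rintro ⟨i, hi, rfl⟩; exact hi
    · intro hx; exact ⟨⟨x, lt_of_lt_of_le hx h⟩, hx, rfl⟩
  have hcai := Finset.card_image_of_injective
    (univ.filter (fun i : Fin n => i.val < m)) Fin.val_injective
  rw [himg, Finset.card_range] at hcai
  rw [h1, ← hcai]

lemma social_of_card (C L : ℝ) (a : Fin n → Bool) {k : ℕ} (hk : (ins a).card = k) :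
    socialCost (⊤ : SimpleGraph (Fin n)) C L a =
      ((n : ℝ) - (k : ℝ)) * C + (k : ℝ) * (L * (k : ℝ) / n) := by
  rw [social_top, hk]

/-- Every Nash equilibrium has social cost at most `n·C`. -/
lemma ne_cost_le (C L : ℝ) (hn : 0 < n) (hC0 : 0 < C) (a : Fin n → Bool)
    (h : isNE (⊤ : SimpleGraph (Fin n)) C L a) :
    socialCost (⊤ : SimpleGraph (Fin n)) C L a ≤ (n : ℝ) * C := by
  rw [social_top]
  set k : ℕ := (ins a).card with hk
  have hkn : k ≤ n := by
    calc k ≤ Finset.univ.card := Finset.card_le_card (Finset.subset_univ _)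
    _ = n := by simp
  have hknR : (k : ℝ) ≤ n := by exact_mod_cast hkn
  rcases Nat.eq_zero_or_pos k with h0 | hpos
  · rw [h0]; push_cast; nlinarith
  · obtain ⟨i, hi⟩ := Finset.card_pos.mp hpos
    have hins := ((isNE_top_iff C L a).mp h).1 i (mem_ins.mp hi)
    rw [← hk] at hins
    have hk0 : (0 : ℝ) ≤ k := Nat.cast_nonneg k
    nlinarith

/-- Every profile has social cost at least `n·C·(1 - C/(4L))`. -/
lemma cost_ge (C L : ℝ) (hn : 0 < n) (hL : 0 < L) (a : Fin n → Bool) :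
    (n : ℝ) * C * (1 - C / (4 * L)) ≤ socialCost (⊤ : SimpleGraph (Fin n)) C L a := by
  rw [social_top]
  set kR : ℝ := ((ins a).card : ℝ) with hk
  have hnR : (0 : ℝ) < n := by exact_mod_cast hn
  have key : (0 : ℝ) ≤ (L / n) * (kR - C * n / (2 * L)) ^ 2 := by positivity
  have hexp : (L / n) * (kR - C * n / (2 * L)) ^ 2
      = kR * (L * kR / n) - kR * C + n * C * (C / (4 * L)) := by
    field_simp
    ring
  nlinarith

/-- Every profile has social cost at most `n·C + n·L`. -/
lemma cost_le (C L : ℝ) (hn : 0 < n) (hC0 : 0 < C) (hL : 0 < L) (a : Fin n → Bool) :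
    socialCost (⊤ : SimpleGraph (Fin n)) C L a ≤ (n : ℝ) * C + (n : ℝ) * L := by
  rw [social_top]
  set kR : ℝ := ((ins a).card : ℝ) with hk
  have hnR : (0 : ℝ) < n := by exact_mod_cast hn
  have hknR : kR ≤ n := by
    rw [hk]
    exact_mod_cast calc (ins a).card ≤ Finset.univ.card := Finset.card_le_card (Finset.subset_univ _)
      _ = n := by simp
  have hk0 : (0 : ℝ) ≤ kR := Nat.cast_nonneg _
  have h1 : kR * (L * kR / n) ≤ n * L := by
    have he : kR * (L * kR / n) = L * kR * kR / n := by ring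
    rw [he, div_le_iff₀ hnR]
    nlinarith [mul_le_mul_of_nonneg_left (mul_le_mul hknR hknR hk0 hnR.le) hL.le]
  nlinarith

lemma exists_ne (C L : ℝ) (hn : 0 < n) (hL : 0 < L) (hCL : C ≤ L) (hC0 : 0 ≤ C) :
    ∃ a : Fin n → Bool, isNE (⊤ : SimpleGraph (Fin n)) C L a := by
  have hnR : (0 : ℝ) < n := by exact_mod_cast hn
  have hx0 : (0 : ℝ) ≤ C * n / L := by positivity
  have hxn : C * n / L ≤ n := by
    rw [div_le_iff₀ hL]; nlinarith
  set m := ⌊C * n / L⌋₊ with hm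
  have hmn : m ≤ n := by
    calc m ≤ ⌊(n : ℝ)⌋₊ := Nat.floor_le_floor hxn
      _ = n := Nat.floor_natCast n
  refine ⟨prof n m, (isNE_top_iff C L _).mpr ⟨?_, ?_⟩⟩
  · intro i _
    rw [ins_prof_card hmn, div_le_iff₀ hnR]
    have hm1 : (m : ℝ) ≤ C * n / L := Nat.floor_le hx0
    rw [le_div_iff₀ hL] at hm1
    nlinarith
  · intro i _
    rw [ins_prof_card hmn, le_div_iff₀ hnR]
    have hm2 : C * n / L < (m : ℝ) + 1 := Nat.lt_floor_add_one _
    rw [div_lt_iff₀ hL] at hm2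
    nlinarith

lemma exists_fne (C L F : ℝ) (hn : 0 < n) (hL : 0 < L) (hC : L / n < C) (hCL : C ≤ L)
    (hF0 : 0 ≤ F) :
    ∃ a : Fin n → Bool, isFNE (⊤ : SimpleGraph (Fin n)) C L F a := by
  have hnR : (0 : ℝ) < n := by exact_mod_cast hn
  have h1F : (0 : ℝ) < 1 + F := by linarith
  have hx1 : (1 : ℝ) < C * n / L := by
    rw [lt_div_iff₀ hL]
    rw [div_lt_iff₀ hnR] at hC
    nlinarith
  have hxn : C * n / L ≤ n := by rw [div_le_iff₀ hL]; nlinarith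
  set y := (C * n / L - 1) / (1 + F) with hy
  have hy0 : 0 ≤ y := by
    apply div_nonneg _ h1F.le
    linarith
  set m := ⌈y⌉₊ with hm
  have hmy : y ≤ (m : ℝ) := Nat.le_ceil y
  have hmlt : (m : ℝ) < y + 1 := Nat.ceil_lt_add_one hy0
  have hmn : m ≤ n := by
    rw [hm, Nat.ceil_le]
    calc y ≤ C * n / L - 1 := by
          apply div_le_self _ (by linarith)
          linarith
      _ ≤ n := by linarith
  have hyc : y * (1 + F) = C * n / L - 1 := div_mul_cancel₀ _ (ne_of_gt h1F)
  refine ⟨prof n m, (isFNE_top_iff C L F _).mpr ⟨?_, ?_⟩⟩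
  · intro i _
    rw [ins_prof_card hmn, div_le_iff₀ hnR]
    have h2 : (m : ℝ) * (1 + F) < (C * n / L - 1) + (1 + F) := by
      calc (m : ℝ) * (1 + F) < (y + 1) * (1 + F) := by
            exact mul_lt_mul_of_pos_right hmlt h1F
        _ = (C * n / L - 1) + (1 + F) := by rw [add_mul, one_mul, hyc]
    have h3 : (m : ℝ) + F * ((m : ℝ) - 1) ≤ C * n / L := by nlinarith
    rw [le_div_iff₀ hL] at h3
    nlinarith
  · intro i _
    rw [ins_prof_card hmn, le_div_iff₀ hnR]
    have h2 : C * n / L - 1 ≤ (m : ℝ) * (1 + F) := by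
      calc C * n / L - 1 = y * (1 + F) := hyc.symm
        _ ≤ (m : ℝ) * (1 + F) := mul_le_mul_of_nonneg_right hmy h1F.le
    have h3 : C * n / L ≤ (m : ℝ) + 1 + F * m := by nlinarith
    rw [div_le_iff₀ hL] at h3
    nlinarith

/-- In the tight case, every FNE has exactly `m = n/2` insecure players. -/
lemma fne_tight_card {m : ℕ} (L : ℝ) (hL : 0 < L) (hm : 0 < m) (hnm : n = m + m)
    (a : Fin n → Bool) (h : isFNE (⊤ : SimpleGraph (Fin n)) L L 1 a) :
    (ins a).card = m := by
  have hn : 0 < n := by omega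
  have hnR : (0 : ℝ) < n := by exact_mod_cast hn
  obtain ⟨h1, h2⟩ := (isFNE_top_iff L L 1 a).mp h
  set k : ℕ := (ins a).card with hk
  have hkn : k ≤ n := by
    calc k ≤ Finset.univ.card := Finset.card_le_card (Finset.subset_univ _)
      _ = n := by simp
  -- k ≤ m
  have hkm : k ≤ m := by
    rcases Nat.eq_zero_or_pos k with h0 | hpos
    · omega
    · obtain ⟨i, hi⟩ := Finset.card_pos.mp hpos
      have := h1 i (mem_ins.mp hi)
      rw [div_le_iff₀ hnR, one_mul] at this
      have h2k : (2 * k : ℝ) ≤ (n : ℝ) + 1 := by nlinarith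
      have h2k' : 2 * k ≤ n + 1 := by exact_mod_cast h2k
      omega
  -- m ≤ k
  have hkltn : k < n := by omega
  have hcompl : ((ins a)ᶜ : Finset (Fin n)).Nonempty := by
    rw [← Finset.card_pos, Finset.card_compl]
    simp only [Fintype.card_fin]
    omega
  obtain ⟨i, hi⟩ := hcompl
  have hit : a i = true := by
    rcases Bool.eq_false_or_eq_true (a i) with ht | hf
    · exact ht
    · exact absurd (mem_ins.mpr hf) (Finset.mem_compl.mp hi)
  have := h2 i hit
  rw [le_div_iff₀ hnR, one_mul] at this
  have hmk : (n : ℝ) ≤ 2 * k + 1 := by nlinarith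
  have hmk' : n ≤ 2 * k + 1 := by exact_mod_cast hmk
  omega

lemma fne_tight_exists {m : ℕ} (L : ℝ) (hL : 0 < L) (hm : 0 < m) (hnm : n = m + m) :
    ∃ a : Fin n → Bool, isFNE (⊤ : SimpleGraph (Fin n)) L L 1 a ∧ (ins a).card = m := by
  have hn : 0 < n := by omega
  have hnR : (0 : ℝ) < n := by exact_mod_cast hn
  have hmn : m ≤ n := by omega
  have hmR : (m : ℝ) + (m : ℝ) = (n : ℝ) := by exact_mod_cast congrArg (Nat.cast (R := ℝ)) hnm.symm
  refine ⟨prof n m, (isFNE_top_iff L L 1 _).mpr ⟨?_, ?_⟩, ins_prof_card hmn⟩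
  · intro i _
    rw [ins_prof_card hmn, div_le_iff₀ hnR, one_mul]
    nlinarith
  · intro i _
    rw [ins_prof_card hmn, le_div_iff₀ hnR, one_mul]
    nlinarith

lemma ne_tight_exists (L : ℝ) (hL : 0 < L) (hn : 0 < n) :
    ∃ a : Fin n → Bool, isNE (⊤ : SimpleGraph (Fin n)) L L a ∧ (ins a).card = n := by
  have hnR : (0 : ℝ) < n := by exact_mod_cast hn
  have hcard : (ins (fun _ : Fin n => false)).card = n := by
    rw [show ins (fun _ : Fin n => false) = univ by ext i; simp [ins]]
    simp
  refine ⟨fun _ => false, (isNE_top_iff L L _).mpr ⟨?_, ?_⟩, hcard⟩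
  · intro i _
    rw [hcard, mul_div_assoc, div_self (ne_of_gt hnR), mul_one]
  · intro i hi
    exact absurd hi (by simp)

end WoF

/-- Theorem (Windfall of Friendship on `K_n` is at most `4/3`, tightly): for all `F ∈ [0,1]` and
all `n`, the worst-NE cost divided by the worst-FNE cost is at most `1/(1 − C/(4L)) ≤ 4/3`;
and for `C = L`, even `n` and `F = 1` the worst FNE costs `3nL/4` while the worst NE costs
`nL`, so the ratio `4/3` is attained. -/
theorem stmt6 (n : ℕ) (C L F : ℝ) (hn : 0 < n) (hL : 0 < L)
    (hC : L / n < C) (hCL : C ≤ L) (hF0 : 0 ≤ F) (hF1 : F ≤ 1) :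
    (sSup {c | ∃ a : Fin n → Bool, isNE (⊤ : SimpleGraph (Fin n)) C L a ∧
          c = socialCost (⊤ : SimpleGraph (Fin n)) C L a} /
        sSup {c | ∃ a : Fin n → Bool, isFNE (⊤ : SimpleGraph (Fin n)) C L F a ∧
          c = socialCost (⊤ : SimpleGraph (Fin n)) C L a} ≤ 1 / (1 - C / (4 * L)) ∧
      1 / (1 - C / (4 * L)) ≤ 4 / 3) ∧
    (C = L → Even n → F = 1 →
      sSup {c | ∃ a : Fin n → Bool, isFNE (⊤ : SimpleGraph (Fin n)) C L F a ∧
          c = socialCost (⊤ : SimpleGraph (Fin n)) C L a} = 3 * n * L / 4 ∧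
      sSup {c | ∃ a : Fin n → Bool, isNE (⊤ : SimpleGraph (Fin n)) C L a ∧
          c = socialCost (⊤ : SimpleGraph (Fin n)) C L a} = n * L ∧
      sSup {c | ∃ a : Fin n → Bool, isNE (⊤ : SimpleGraph (Fin n)) C L a ∧
          c = socialCost (⊤ : SimpleGraph (Fin n)) C L a} /
        sSup {c | ∃ a : Fin n → Bool, isFNE (⊤ : SimpleGraph (Fin n)) C L F a ∧
          c = socialCost (⊤ : SimpleGraph (Fin n)) C L a} = 4 / 3) := by
  have hnR : (0 : ℝ) < n := by exact_mod_cast hn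
  have hC0 : 0 < C := lt_trans (div_pos hL hnR) hC
  have ht0 : 0 < 1 - C / (4 * L) := by
    have h4 : C / (4 * L) < 1 := by rw [div_lt_one (by linarith)]; linarith
    linarith
  set SN := {c | ∃ a : Fin n → Bool, isNE (⊤ : SimpleGraph (Fin n)) C L a ∧
      c = socialCost (⊤ : SimpleGraph (Fin n)) C L a} with hSN
  set SF := {c | ∃ a : Fin n → Bool, isFNE (⊤ : SimpleGraph (Fin n)) C L F a ∧
      c = socialCost (⊤ : SimpleGraph (Fin n)) C L a} with hSF
  have hSNne : SN.Nonempty := by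
    obtain ⟨a, ha⟩ := WoF.exists_ne C L hn hL hCL hC0.le
    exact ⟨_, a, ha, rfl⟩
  have hSFne : SF.Nonempty := by
    obtain ⟨a, ha⟩ := WoF.exists_fne C L F hn hL hC hCL hF0
    exact ⟨_, a, ha, rfl⟩
  have hNub : ∀ c ∈ SN, c ≤ (n : ℝ) * C := by
    rintro c ⟨a, ha, rfl⟩
    exact WoF.ne_cost_le C L hn hC0 a ha
  have hSFbdd : BddAbove SF := by
    refine ⟨(n : ℝ) * C + (n : ℝ) * L, ?_⟩
    rintro c ⟨a, ha, rfl⟩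
    exact WoF.cost_le C L hn hC0 hL a
  have supN_le : sSup SN ≤ (n : ℝ) * C := csSup_le hSNne hNub
  have supF_ge : (n : ℝ) * C * (1 - C / (4 * L)) ≤ sSup SF := by
    obtain ⟨c, a, ha, rfl⟩ := hSFne
    exact le_trans (WoF.cost_ge C L hn hL a) (le_csSup hSFbdd ⟨a, ha, rfl⟩)
  have supF_pos : 0 < sSup SF := lt_of_lt_of_le (by positivity) supF_ge
  have supN_nonneg : 0 ≤ sSup SN := by
    obtain ⟨c, a, ha, rfl⟩ := hSNne
    refine le_trans ?_ (le_csSup ⟨(n : ℝ) * C, hNub⟩ ⟨a, ha, rfl⟩)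
    have h1 := WoF.cost_ge C L hn hL a
    have h2 : (0:ℝ) < (n : ℝ) * C * (1 - C / (4 * L)) := by positivity
    linarith
  refine ⟨⟨?_, ?_⟩, ?_⟩
  · rw [div_le_div_iff₀ supF_pos ht0]
    have h1 : sSup SN * (1 - C / (4 * L)) ≤ (n : ℝ) * C * (1 - C / (4 * L)) :=
      mul_le_mul_of_nonneg_right supN_le ht0.le
    linarith
  · rw [div_le_div_iff₀ ht0 (by norm_num : (0:ℝ) < 3)]
    have h4 : C / (4 * L) ≤ 1 / 4 := by
      rw [div_le_div_iff₀ (by linarith) (by norm_num)]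
      linarith
    linarith
  · intro hCLeq hEven hFeq
    subst hCLeq
    subst hFeq
    obtain ⟨m, hm⟩ := hEven
    have hm0 : 0 < m := by omega
    have hmR : (0 : ℝ) < m := by exact_mod_cast hm0
    have hnmR : (n : ℝ) = (m : ℝ) + m := by exact_mod_cast congrArg (Nat.cast (R := ℝ)) hm
    have hcost : ∀ a : Fin n → Bool, (WoF.ins a).card = m →
        socialCost (⊤ : SimpleGraph (Fin n)) C C a = 3 * n * C / 4 := by
      intro a hk
      rw [WoF.social_of_card C C a hk, hnmR]
      field_simp
      ring
    have hFg : IsGreatest SF (3 * n * C / 4) := by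
      constructor
      · obtain ⟨a, ha, hcard⟩ := WoF.fne_tight_exists C hC0 hm0 hm
        exact ⟨a, ha, (hcost a hcard).symm⟩
      · rintro c ⟨a, ha, rfl⟩
        rw [hcost a (WoF.fne_tight_card C hC0 hm0 hm a ha)]
    have hNg : IsGreatest SN ((n : ℝ) * C) := by
      constructor
      · obtain ⟨a, ha, hcard⟩ := WoF.ne_tight_exists C hC0 hn
        refine ⟨a, ha, ?_⟩
        rw [WoF.social_of_card C C a hcard]
        field_simp
        ring
      · exact hNub
    refine ⟨hFg.csSup_eq, hNg.csSup_eq, ?_⟩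
    rw [hFg.csSup_eq, hNg.csSup_eq,
      div_eq_div_iff (by positivity) (by norm_num : (3:ℝ) ≠ 0)]
    ring
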